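/- (Grönwall comparison with p-dependent nonlinearity.) Let η : [0,T] → [0,∞) be absolutely continuous with η(0) = 0 and η'(t) ≤ C·p·max(η(t)^{1−1/p}, η(t)) for a.e. t, for every integer p ≥ 1, where C > 0 is independent of p. Then η(t) ≤ (Ct)^p for all t < 1/C and every p, and hence η ≡ 0 on [0, 1/(2C)]. -/

import Mathlib

open MeasureTheory intervalIntegral

private lemma gronwall_key (C T : ℝ) (hC : 0 < C)
    (η f : ℝ → ℝ) (hηpos : ∀ t ∈ Set.Icc 0 T, 0 ≤ η t)
    (hfint : IntegrableOn f (Set.Icc 0 T))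
    (hAC : ∀ t ∈ Set.Icc 0 T, η t = ∫ s in (0 : ℝ)..t, f s)
    (hf : ∀ᵐ s ∂(volume.restrict (Set.Icc 0 T)), ∀ p : ℕ, 1 ≤ p →
      f s ≤ C * p * max (η s ^ (1 - 1 / (p : ℝ))) (η s))
    (p : ℕ) (hp : 1 ≤ p) (ε t : ℝ) (hε : 0 < ε) (ht0 : 0 ≤ t) (htT : T ≥ t)
    (htε : C * t + ε ≤ 1) : η t ≤ (ε + C * t) ^ p := by
  -- continuity of η on [0,T]
  have hT0 : (0:ℝ) ≤ T := ht0.trans htT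
  have hcont : ContinuousOn η (Set.Icc 0 T) := by
    have h1 : ContinuousOn (fun x => ∫ s in (0:ℝ)..x, f s) (Set.Icc 0 T) := by
      have := continuousOn_primitive_interval (a := (0:ℝ)) (b := T) (μ := volume) (f := f)
        (by rwa [Set.uIcc_of_le hT0])
      rwa [Set.uIcc_of_le hT0] at this
    exact h1.congr hAC
  by_contra hcon
  set g : ℝ → ℝ := fun s => (ε + C * s) ^ p with hg
  set Bad : Set ℝ := {s | s ∈ Set.Icc 0 t ∧ g s < η s} with hBad
  have hne : Bad.Nonempty := ⟨t, ⟨ht0, le_refl t⟩, lt_of_not_ge hcon⟩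
  have hbdd : BddBelow Bad := ⟨0, fun x hx => hx.1.1⟩
  set c := sInf Bad with hc
  have hc0 : 0 ≤ c := le_csInf hne fun x hx => hx.1.1
  have hct : c ≤ t := by
    obtain ⟨x, hx⟩ := hne
    exact (csInf_le hbdd hx).trans hx.1.2
  have hcT : c ≤ T := hct.trans htT
  have hlt : ∀ s, 0 ≤ s → s < c → η s ≤ g s := by
    intro s h0 hs
    by_contra h
    exact absurd (csInf_le hbdd ⟨⟨h0, hs.le.trans hct⟩, lt_of_not_ge h⟩) (not_le.mpr hs)
  -- the interval integrability facts
  have hintf : IntervalIntegrable f volume 0 c := by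
    rw [intervalIntegrable_iff_integrableOn_Ioc_of_le hc0]
    exact hfint.mono_set ((Set.Ioc_subset_Icc_self).trans (Set.Icc_subset_Icc le_rfl hcT))
  have hderiv : ∀ s : ℝ, HasDerivAt g (C * p * (ε + C * s) ^ (p - 1)) s := by
    intro s
    have h1 : HasDerivAt (fun u : ℝ => ε + C * u) C s := by
      simpa using ((hasDerivAt_id s).const_mul C).const_add ε
    have := h1.fun_pow p
    exact this.congr_deriv (by ring)
  have hinth : IntervalIntegrable (fun s => C * p * (ε + C * s) ^ (p - 1)) volume 0 c := by
    exact (continuous_const.mul ((continuous_const.add (continuous_const.mul continuous_id)).pow _)).intervalIntegrable _ _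
  -- a.e. pointwise bound on [0,c]
  have haebound : (fun s => f s) ≤ᵐ[volume.restrict (Set.Icc 0 c)]
      (fun s => C * p * (ε + C * s) ^ (p - 1)) := by
    have hsub : Set.Icc (0:ℝ) c ⊆ Set.Icc 0 T := Set.Icc_subset_Icc le_rfl hcT
    have hf' : ∀ᵐ s ∂(volume.restrict (Set.Icc 0 c)), ∀ q : ℕ, 1 ≤ q →
        f s ≤ C * q * max (η s ^ (1 - 1 / (q : ℝ))) (η s) :=
      ae_restrict_of_ae_restrict_of_subset hsub hf
    have hnec : ∀ᵐ s ∂(volume.restrict (Set.Icc 0 c)), s ≠ c := by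
      refine ae_restrict_of_ae ?_
      rw [ae_iff]
      simpa using measure_singleton c
    filter_upwards [hf', hnec, ae_restrict_mem measurableSet_Icc] with s hs hsne hsmem
    have hs0 : 0 ≤ s := hsmem.1
    have hsc : s < c := lt_of_le_of_ne hsmem.2 hsne
    have hηs : η s ≤ g s := hlt s hs0 hsc
    have hηs0 : 0 ≤ η s := hηpos s ⟨hs0, (hsc.le.trans hcT)⟩
    set x := ε + C * s with hx
    have hx0 : 0 < x := by positivity
    have hx1 : x ≤ 1 := by
      have : C * s ≤ C * t := by nlinarith
      simp only [hx]; linarith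
    -- η s ≤ x ^ (p-1)
    have hb1 : η s ≤ x ^ (p - 1) := by
      refine hηs.trans ?_
      exact pow_le_pow_of_le_one hx0.le hx1 (Nat.sub_le p 1)
    -- η s ^ (1-1/p) ≤ x ^ (p-1)
    have hb2 : η s ^ (1 - 1 / (p : ℝ)) ≤ x ^ (p - 1) := by
      have hexp : (0:ℝ) ≤ 1 - 1 / (p : ℝ) := by
        have : (1:ℝ) ≤ (p:ℝ) := by exact_mod_cast hp
        have : 1 / (p:ℝ) ≤ 1 := by
          rw [div_le_one (by linarith)]; linarith
        linarith
      have h2 : η s ^ (1 - 1 / (p : ℝ)) ≤ (x ^ p) ^ (1 - 1 / (p : ℝ)) :=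
        Real.rpow_le_rpow hηs0 hηs hexp
      refine h2.trans_eq ?_
      have hp0 : (p:ℝ) ≠ 0 := by positivity
      rw [← Real.rpow_natCast x p, ← Real.rpow_mul hx0.le]
      have : (p : ℝ) * (1 - 1 / (p : ℝ)) = ((p - 1 : ℕ) : ℝ) := by
        have : ((p - 1 : ℕ) : ℝ) = (p : ℝ) - 1 := by
          have : (1:ℕ) ≤ p := hp
          push_cast [Nat.cast_sub this]
          ring
        rw [this]
        field_simp
      rw [this, Real.rpow_natCast]
    have := hs p hp
    calc f s ≤ C * p * max (η s ^ (1 - 1 / (p : ℝ))) (η s) := this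
      _ ≤ C * p * (x ^ (p-1)) := by
          apply mul_le_mul_of_nonneg_left (max_le hb2 hb1)
          positivity
  -- integral comparison
  have hηc : η c = ∫ s in (0:ℝ)..c, f s := hAC c ⟨hc0, hcT⟩
  have hint_eq : ∫ s in (0:ℝ)..c, C * p * (ε + C * s) ^ (p - 1) = g c - g 0 := by
    exact integral_eq_sub_of_hasDerivAt (fun s _ => hderiv s)
      (by exact (continuous_const.mul ((continuous_const.add (continuous_const.mul continuous_id)).pow _)).intervalIntegrable _ _)
  have hup : η c < g c := by
    have h1 : η c ≤ ∫ s in (0:ℝ)..c, C * p * (ε + C * s) ^ (p - 1) := by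
      rw [hηc]
      exact integral_mono_ae_restrict hc0 hintf hinth haebound
    have hg0 : 0 < g 0 := by
      simp only [hg, mul_zero, add_zero]
      positivity
    rw [hint_eq] at h1
    linarith
  -- c is in the closure of Bad, so g c ≤ η c
  have hmemcl : c ∈ closure Bad := csInf_mem_closure hne hbdd
  have hnb : (nhdsWithin c Bad).NeBot := mem_closure_iff_nhdsWithin_neBot.mp hmemcl
  have htendη : Filter.Tendsto η (nhdsWithin c Bad) (nhds (η c)) := by
    have h1 : ContinuousWithinAt η (Set.Icc 0 T) c := hcont.continuousWithinAt ⟨hc0, hcT⟩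
    exact h1.mono fun x hx => ⟨hx.1.1, hx.1.2.trans htT⟩
  have htendg : Filter.Tendsto g (nhdsWithin c Bad) (nhds (g c)) := by
    have : Continuous g := (continuous_const.add (continuous_const.mul continuous_id)).pow _
    exact (this.tendsto c).mono_left nhdsWithin_le_nhds
  have hge : g c ≤ η c :=
    le_of_tendsto_of_tendsto htendg htendη
      (eventually_mem_nhdsWithin.mono fun x hx => hx.2.le)
  linarith

/-- Grönwall comparison with `p`-dependent nonlinearity: if `η ≥ 0` is absolutely continuous on
`[0,T]` with `η(0) = 0` and `η' ≤ C·p·max(η^{1−1/p}, η)` a.e. for every `p ≥ 1`, then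
`η(t) ≤ (Ct)^p` for `t < 1/C`, and `η ≡ 0` on `[0, 1/(2C)]`. -/
theorem gronwall_p_nonlinearity (C T : ℝ) (hC : 0 < C) (hT : 0 < T)
    (η f : ℝ → ℝ) (hη0 : η 0 = 0) (hηpos : ∀ t ∈ Set.Icc 0 T, 0 ≤ η t)
    (hfint : IntegrableOn f (Set.Icc 0 T))
    (hAC : ∀ t ∈ Set.Icc 0 T, η t = η 0 + ∫ s in (0 : ℝ)..t, f s)
    (hf : ∀ᵐ s ∂(volume.restrict (Set.Icc 0 T)), ∀ p : ℕ, 1 ≤ p →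
      f s ≤ C * p * max (η s ^ (1 - 1 / (p : ℝ))) (η s)) :
    (∀ p : ℕ, 1 ≤ p → ∀ t, 0 ≤ t → t ≤ T → t < 1 / C → η t ≤ (C * t) ^ p)
      ∧ ∀ t, 0 ≤ t → t ≤ T → t ≤ 1 / (2 * C) → η t = 0 := by
  have hAC' : ∀ t ∈ Set.Icc 0 T, η t = ∫ s in (0 : ℝ)..t, f s := by
    intro t ht; rw [hAC t ht, hη0, zero_add]
  have part1 : ∀ p : ℕ, 1 ≤ p → ∀ t, 0 ≤ t → t ≤ T → t < 1 / C → η t ≤ (C * t) ^ p := by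
    intro p hp t ht0 htT htC
    have hCt : C * t < 1 := by
      rw [lt_div_iff₀ hC] at htC
      linarith
    have key : ∀ ε : ℝ, ε ∈ Set.Ioo 0 (1 - C * t) → η t ≤ (ε + C * t) ^ p := by
      intro ε hεm
      exact gronwall_key C T hC η f hηpos hfint hAC' hf p hp ε t hεm.1 ht0 htT
        (by linarith [hεm.2])
    have htend : Filter.Tendsto (fun ε : ℝ => (ε + C * t) ^ p) (nhdsWithin 0 (Set.Ioi 0))
        (nhds ((C * t) ^ p)) := by
      have hcont : Continuous (fun ε : ℝ => (ε + C * t) ^ p) := (continuous_id.add continuous_const).pow _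
      have := (hcont.tendsto 0).mono_left (nhdsWithin_le_nhds (s := Set.Ioi (0:ℝ)))
      simpa using this
    refine ge_of_tendsto htend ?_
    filter_upwards [Ioo_mem_nhdsGT_of_mem (show (0:ℝ) ∈ Set.Ico 0 (1 - C*t) by constructor <;> linarith)] with ε hε
    exact key ε hε
  refine ⟨part1, ?_⟩
  intro t ht0 htT ht2C
  have hCt : C * t ≤ 1 / 2 := by
    rw [le_div_iff₀ (by positivity)] at ht2C
    linarith
  have htC : t < 1 / C := by
    rw [lt_div_iff₀ hC]
    linarith
  have hb : ∀ p : ℕ, 1 ≤ p → η t ≤ (1/2 : ℝ) ^ p := by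
    intro p hp
    refine (part1 p hp t ht0 htT htC).trans ?_
    exact pow_le_pow_left₀ (by positivity) hCt p
  have htend : Filter.Tendsto (fun p : ℕ => (1/2 : ℝ) ^ p) Filter.atTop (nhds 0) := by
    apply tendsto_pow_atTop_nhds_zero_of_lt_one <;> norm_num
  have hle : η t ≤ 0 := by
    refine ge_of_tendsto htend ?_
    filter_upwards [Filter.eventually_ge_atTop 1] with p hp
    exact hb p hp
  exact le_antisymm hle (hηpos t ⟨ht0, htT⟩)
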